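/- Fix μ0, μ1 > 0 and real numbers d0, d1, and let ω > 0 satisfy G(ω) = 0, where G(ω) := (ω² − μ0·μ1·(ω² − d0)·(ω² − d1))·sin ω + (μ0·(ω² − d0) + μ1·(ω² − d1))·ω·cos ω. Then the function X_ω(x) := ω·cos(ωx) + μ0·(d0 − ω²)·sin(ωx) is a not-identically-zero solution of the problem X'' = −ω²·X on [0,1], X'(0) = μ0·(−ω² + d0)·X(0), X'(1) = −μ1·(−ω² + d1)·X(1); moreover, every C² solution of this problem is a real scalar multiple of X_ω, i.e. the eigenspace associated with the eigenvalue −ω² is one-dimensional. -/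

import Mathlib

open Real Set

/-- If ω > 0 satisfies G(ω) = 0 then
X_ω(x) = ω cos(ωx) + μ0(d0-ω²) sin(ωx) is a nontrivial solution of the BVP,
and every C² solution of the BVP is a scalar multiple of X_ω. -/
theorem negative_eigenvalue_eigenspace_one_dimensional
    (μ0 μ1 d0 d1 ω : ℝ) (hμ0 : 0 < μ0) (hμ1 : 0 < μ1) (hω : 0 < ω)
    (hG : (ω^2 - μ0*μ1*(ω^2 - d0)*(ω^2 - d1)) * Real.sin ω
        + (μ0*(ω^2 - d0) + μ1*(ω^2 - d1)) * ω * Real.cos ω = 0)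
    (Xω : ℝ → ℝ)
    (hXω : ∀ x, Xω x = ω * Real.cos (ω * x) + μ0 * (d0 - ω^2) * Real.sin (ω * x)) :
    (ContDiff ℝ 2 Xω ∧
      (∀ x ∈ Icc (0:ℝ) 1, deriv (deriv Xω) x = -ω^2 * Xω x) ∧
      deriv Xω 0 = μ0 * (-ω^2 + d0) * Xω 0 ∧
      deriv Xω 1 = -μ1 * (-ω^2 + d1) * Xω 1 ∧
      (∃ x ∈ Icc (0:ℝ) 1, Xω x ≠ 0)) ∧
    (∀ X : ℝ → ℝ, ContDiff ℝ 2 X →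
      (∀ x ∈ Icc (0:ℝ) 1, deriv (deriv X) x = -ω^2 * X x) →
      deriv X 0 = μ0 * (-ω^2 + d0) * X 0 →
      deriv X 1 = -μ1 * (-ω^2 + d1) * X 1 →
      ∃ c : ℝ, ∀ x ∈ Icc (0:ℝ) 1, X x = c * Xω x) := by
  have hXωeq : Xω = fun x => ω * Real.cos (ω * x) + μ0 * (d0 - ω^2) * Real.sin (ω * x) :=
    funext hXω
  subst hXωeq
  set A : ℝ := μ0 * (d0 - ω^2) with hA
  -- basic derivative facts about sin(ωx), cos(ωx)
  have hlin : ∀ x : ℝ, HasDerivAt (fun y : ℝ => ω * y) ω x := by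
    intro x
    simpa using (hasDerivAt_id x).const_mul ω
  have hcos : ∀ x : ℝ, HasDerivAt (fun y : ℝ => Real.cos (ω * y)) (-(ω * Real.sin (ω * x))) x := by
    intro x
    simpa [mul_comm, Function.comp_def] using (Real.hasDerivAt_cos (ω * x)).comp x (hlin x)
  have hsin : ∀ x : ℝ, HasDerivAt (fun y : ℝ => Real.sin (ω * y)) (ω * Real.cos (ω * x)) x := by
    intro x
    simpa [mul_comm, Function.comp_def] using (Real.hasDerivAt_sin (ω * x)).comp x (hlin x)
  -- first derivative of Xω
  have hd1 : ∀ x : ℝ, HasDerivAt (fun x => ω * Real.cos (ω * x) + A * Real.sin (ω * x))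
      (-(ω^2) * Real.sin (ω * x) + A * ω * Real.cos (ω * x)) x := by
    intro x
    have h : HasDerivAt (fun x => ω * Real.cos (ω * x) + A * Real.sin (ω * x)) _ x := ((hcos x).const_mul ω).add ((hsin x).const_mul A)
    convert h using 1
    ring
  have hXd : ∀ x : ℝ, deriv (fun x => ω * Real.cos (ω * x) + A * Real.sin (ω * x)) x
      = -(ω^2) * Real.sin (ω * x) + A * ω * Real.cos (ω * x) := fun x => (hd1 x).deriv
  have hXdfun : deriv (fun x => ω * Real.cos (ω * x) + A * Real.sin (ω * x))
      = fun x => -(ω^2) * Real.sin (ω * x) + A * ω * Real.cos (ω * x) := funext hXd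
  -- second derivative
  have hd2 : ∀ x : ℝ, HasDerivAt (fun x => -(ω^2) * Real.sin (ω * x) + A * ω * Real.cos (ω * x))
      (-(ω^2) * (ω * Real.cos (ω * x) + A * Real.sin (ω * x))) x := by
    intro x
    have h : HasDerivAt (fun x => -(ω^2) * Real.sin (ω * x) + A * ω * Real.cos (ω * x)) _ x := ((hsin x).const_mul (-(ω^2))).add ((hcos x).const_mul (A * ω))
    convert h using 1
    ring
  have hXdd : ∀ x : ℝ, deriv (deriv (fun x => ω * Real.cos (ω * x) + A * Real.sin (ω * x))) x
      = -(ω^2) * (ω * Real.cos (ω * x) + A * Real.sin (ω * x)) := by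
    intro x
    rw [hXdfun]
    exact (hd2 x).deriv
  constructor
  · refine ⟨?_, ?_, ?_, ?_, ?_⟩
    · exact (contDiff_const.mul (Real.contDiff_cos.comp (contDiff_const.mul contDiff_id))).add
        (contDiff_const.mul (Real.contDiff_sin.comp (contDiff_const.mul contDiff_id)))
    · intro x _
      simpa using hXdd x
    · have h := hXd 0
      simp only [mul_zero, Real.sin_zero, Real.cos_zero] at h ⊢
      rw [h]
      ring
    · have h := hXd 1
      simp only [mul_one] at h ⊢
      rw [h]
      linear_combination -hG
    · exact ⟨0, by constructor <;> norm_num, by simp [hω.ne']⟩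
  · intro X hC2 heq hbc0 _
    have hXdiff : Differentiable ℝ X := hC2.differentiable (by norm_num)
    have hC2' : ContDiff ℝ ((1 : ℕ) + 1) X := by exact_mod_cast hC2
    have hC1' : ContDiff ℝ (1 : ℕ) (deriv X) := (contDiff_succ_iff_deriv.mp hC2').2.2
    have hX'diff : Differentiable ℝ (deriv X) := hC1'.differentiable (by norm_num)
    set c : ℝ := X 0 / ω with hc
    refine ⟨c, ?_⟩
    set Y : ℝ → ℝ := fun x => X x - c * (ω * Real.cos (ω * x) + A * Real.sin (ω * x)) with hY
    set Yd : ℝ → ℝ := fun x => deriv X x - c * (-(ω^2) * Real.sin (ω * x) + A * ω * Real.cos (ω * x)) with hYd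
    have hYder : ∀ x : ℝ, HasDerivAt Y (Yd x) x := by
      intro x
      exact ((hXdiff x).hasDerivAt).sub ((hd1 x).const_mul c)
    have hYdder : ∀ x : ℝ, HasDerivAt Yd
        (deriv (deriv X) x - c * (-(ω^2) * (ω * Real.cos (ω * x) + A * Real.sin (ω * x)))) x := by
      intro x
      exact ((hX'diff x).hasDerivAt).sub ((hd2 x).const_mul c)
    set E : ℝ → ℝ := fun x => Yd x ^ 2 + ω^2 * Y x ^ 2 with hE
    have hEder : ∀ x ∈ Icc (0:ℝ) 1, HasDerivAt E 0 x := by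
      intro x hx
      have h : HasDerivAt E _ x := (((hYdder x).pow 2)).add (((hYder x).pow 2).const_mul (ω^2))
      have hdd : deriv (deriv X) x = -ω^2 * X x := heq x hx
      convert h using 1
      simp only [hdd, hY, hYd]
      ring
    have hEcont : ContinuousOn E (Icc (0:ℝ) 1) := by
      intro x _
      exact ((((hYdder x).pow 2)).add (((hYder x).pow 2).const_mul (ω^2))).continuousAt.continuousWithinAt
    have hE0 : E 0 = 0 := by
      have hY0 : Y 0 = 0 := by
        simp only [hY, mul_zero, Real.cos_zero, Real.sin_zero, hc]
        field_simp
        ring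
      have hYd0 : Yd 0 = 0 := by
        simp only [hYd, mul_zero, Real.cos_zero, Real.sin_zero, hc, hbc0, hA]
        field_simp
        ring
      simp [hE, hY0, hYd0]
    have hEzero : ∀ x ∈ Icc (0:ℝ) 1, E x = 0 := by
      have h := constant_of_has_deriv_right_zero hEcont (fun x hx =>
        (hEder x ⟨hx.1, hx.2.le⟩).hasDerivWithinAt)
      intro x hx
      rw [h x hx, hE0]
    intro x hx
    have hx0 : E x = 0 := hEzero x hx
    have hYx : Y x = 0 := by
      simp only [hE] at hx0
      have h1 : ω^2 * Y x ^ 2 = 0 := by nlinarith [sq_nonneg (Yd x), mul_nonneg (sq_nonneg ω) (sq_nonneg (Y x))]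
      have h2 : Y x ^ 2 = 0 := by
        rcases mul_eq_zero.mp h1 with h | h
        · exact absurd h (by positivity)
        · exact h
      exact pow_eq_zero_iff two_ne_zero |>.mp h2
    have h3 : X x - c * (ω * Real.cos (ω * x) + A * Real.sin (ω * x)) = 0 := by
      simpa [hY] using hYx
    have h4 : X x = c * (ω * Real.cos (ω * x) + A * Real.sin (ω * x)) := by linarith
    simpa using h4
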